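/- The adjoint of the partitioned AVF method is again energy-preserving: if H : ℝ^d × ℝ^d → ℝ is C¹, S is skew-symmetric, τ ≠ 0, and (p^{n+1},q^{n+1}) satisfies (1/τ)((p^{n+1}-p^n),(q^{n+1}-q^n)) = S·(∫₀¹ H_p(ξp^{n+1}+(1-ξ)p^n, q^{n+1}) dξ, ∫₀¹ H_q(p^n, ξq^{n+1}+(1-ξ)q^n) dξ), then H(p^{n+1},q^{n+1}) = H(p^n,q^n). -/

import Mathlib

open MeasureTheory Matrix

lemma line_integral_aux {E : Type*} [NormedAddCommGroup E] [NormedSpace ℝ E]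
    (F : E → ℝ) (hF : ContDiff ℝ 1 F) (a b : E) :
    ∫ ξ in (0:ℝ)..1, fderiv ℝ F (ξ • b + (1 - ξ) • a) (b - a) = F b - F a := by
  have hd : Differentiable ℝ F := hF.differentiable one_ne_zero
  have hpath : ∀ ξ : ℝ, HasDerivAt (fun t : ℝ => t • b + (1 - t) • a) (b - a) ξ := by
    intro ξ
    have h1 : HasDerivAt (fun t : ℝ => t • b) b ξ := by
      simpa using (hasDerivAt_id ξ).smul_const b
    have h0 : HasDerivAt (fun t : ℝ => (1 - t)) (-1) ξ := by
      simpa using (hasDerivAt_id ξ).const_sub 1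
    have h2 : HasDerivAt (fun t : ℝ => (1 - t) • a) ((-1 : ℝ) • a) ξ := h0.smul_const a
    have := h1.add h2
    simpa [sub_eq_add_neg, Pi.add_def] using this
  have hg : ∀ ξ : ℝ, HasDerivAt (fun t => F (t • b + (1 - t) • a))
      (fderiv ℝ F (ξ • b + (1 - ξ) • a) (b - a)) ξ := fun ξ =>
    (hd _).hasFDerivAt.comp_hasDerivAt ξ (hpath ξ)
  have hcont : Continuous fun ξ : ℝ => fderiv ℝ F (ξ • b + (1 - ξ) • a) (b - a) := by
    have h1 : Continuous (fderiv ℝ F) := hF.continuous_fderiv one_ne_zero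
    have h2 : Continuous fun ξ : ℝ => (ξ • b + (1 - ξ) • a) := by continuity
    exact (h1.comp h2).clm_apply continuous_const
  rw [intervalIntegral.integral_eq_sub_of_hasDerivAt (fun ξ _ => hg ξ)
    (hcont.intervalIntegrable 0 1)]
  simp

lemma single_expand {d : ℕ} (c : Fin d → ℝ) :
    ((c, (0 : Fin d → ℝ)) : (Fin d → ℝ) × (Fin d → ℝ)) =
      ∑ i : Fin d, c i • (((Pi.single i 1 : Fin d → ℝ), (0 : Fin d → ℝ))) := by
  refine Prod.ext ?_ ?_
  · rw [Prod.fst_sum]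
    funext j
    simp [Finset.sum_apply, Pi.single_apply, mul_comm]
  · rw [Prod.snd_sum]
    simp

lemma single_expand' {d : ℕ} (c : Fin d → ℝ) :
    (((0 : Fin d → ℝ), c) : (Fin d → ℝ) × (Fin d → ℝ)) =
      ∑ i : Fin d, c i • (((0 : Fin d → ℝ), (Pi.single i 1 : Fin d → ℝ))) := by
  refine Prod.ext ?_ ?_
  · rw [Prod.fst_sum]
    simp
  · rw [Prod.snd_sum]
    funext j
    simp [Finset.sum_apply, Pi.single_apply, mul_comm]

theorem adjoint_pavf_energy_preservation {d : ℕ}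
    (H : (Fin d → ℝ) × (Fin d → ℝ) → ℝ) (hH : ContDiff ℝ 1 H)
    (Hp Hq : (Fin d → ℝ) → (Fin d → ℝ) → (Fin d → ℝ))
    (hHp : ∀ p q i, Hp p q i = fderiv ℝ H (p, q) (Pi.single i 1, 0))
    (hHq : ∀ p q i, Hq p q i = fderiv ℝ H (p, q) (0, Pi.single i 1))
    (S : Matrix ((Fin d) ⊕ (Fin d)) ((Fin d) ⊕ (Fin d)) ℝ)
    (hS : S.transpose = -S)
    (τ : ℝ) (hτ : τ ≠ 0)
    (p0 p1 q0 q1 : Fin d → ℝ)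
    (hupdate : ∀ j, τ⁻¹ • (Sum.elim (p1 - p0) (q1 - q0)) j =
      S.mulVec (Sum.elim
        (fun i => ∫ ξ in (0:ℝ)..1, Hp (ξ • p1 + (1 - ξ) • p0) q1 i)
        (fun i => ∫ ξ in (0:ℝ)..1, Hq p0 (ξ • q1 + (1 - ξ) • q0) i)) j) :
    H (p1, q1) = H (p0, q0) := by
  set A : Fin d → ℝ := fun i => ∫ ξ in (0:ℝ)..1, Hp (ξ • p1 + (1 - ξ) • p0) q1 i with hA
  set B : Fin d → ℝ := fun i => ∫ ξ in (0:ℝ)..1, Hq p0 (ξ • q1 + (1 - ξ) • q0) i with hB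
  set v : (Fin d ⊕ Fin d) → ℝ := Sum.elim A B with hv
  set c : Fin d → ℝ := p1 - p0 with hc
  set e : Fin d → ℝ := q1 - q0 with he
  have hcont_fderiv : Continuous (fderiv ℝ H) := hH.continuous_fderiv one_ne_zero
  -- point identities
  have hpt1 : ∀ ξ : ℝ, ξ • ((p1, q1) : (Fin d → ℝ) × (Fin d → ℝ)) + (1 - ξ) • (p0, q1)
      = (ξ • p1 + (1 - ξ) • p0, q1) := by
    intro ξ
    refine Prod.ext rfl ?_
    show ξ • q1 + (1 - ξ) • q1 = q1
    rw [← add_smul]; simp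
  have hpt2 : ∀ ξ : ℝ, ξ • ((p0, q1) : (Fin d → ℝ) × (Fin d → ℝ)) + (1 - ξ) • (p0, q0)
      = (p0, ξ • q1 + (1 - ξ) • q0) := by
    intro ξ
    refine Prod.ext ?_ rfl
    show ξ • p0 + (1 - ξ) • p0 = p0
    rw [← add_smul]; simp
  -- expansion of directional derivative in coordinates
  have hexp1 : ∀ x : (Fin d → ℝ) × (Fin d → ℝ),
      fderiv ℝ H x (c, 0) = ∑ i, c i * fderiv ℝ H x (Pi.single i 1, 0) := by
    intro x
    rw [single_expand c, map_sum]
    exact Finset.sum_congr rfl fun i _ => by rw [(fderiv ℝ H x).map_smul]; rfl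
  have hexp2 : ∀ x : (Fin d → ℝ) × (Fin d → ℝ),
      fderiv ℝ H x (0, e) = ∑ i, e i * fderiv ℝ H x (0, Pi.single i 1) := by
    intro x
    rw [single_expand' e, map_sum]
    exact Finset.sum_congr rfl fun i _ => by rw [(fderiv ℝ H x).map_smul]; rfl
  -- integrability of each coordinate
  have hcontHp : ∀ i : Fin d, Continuous fun ξ : ℝ => Hp (ξ • p1 + (1 - ξ) • p0) q1 i := by
    intro i
    have : (fun ξ : ℝ => Hp (ξ • p1 + (1 - ξ) • p0) q1 i)
        = fun ξ : ℝ => fderiv ℝ H (ξ • p1 + (1 - ξ) • p0, q1) (Pi.single i 1, 0) := by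
      funext ξ; rw [hHp]
    rw [this]
    have hp2 : Continuous fun ξ : ℝ => ((ξ • p1 + (1 - ξ) • p0, q1) : (Fin d → ℝ) × (Fin d → ℝ)) :=
      ((continuous_id.smul continuous_const).add
        ((continuous_const.sub continuous_id).smul continuous_const)).prodMk continuous_const
    exact ((hcont_fderiv.comp hp2).clm_apply continuous_const)
  have hcontHq : ∀ i : Fin d, Continuous fun ξ : ℝ => Hq p0 (ξ • q1 + (1 - ξ) • q0) i := by
    intro i
    have : (fun ξ : ℝ => Hq p0 (ξ • q1 + (1 - ξ) • q0) i)
        = fun ξ : ℝ => fderiv ℝ H (p0, ξ • q1 + (1 - ξ) • q0) (0, Pi.single i 1) := by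
      funext ξ; rw [hHq]
    rw [this]
    have hp2 : Continuous fun ξ : ℝ => ((p0, ξ • q1 + (1 - ξ) • q0) : (Fin d → ℝ) × (Fin d → ℝ)) :=
      continuous_const.prodMk ((continuous_id.smul continuous_const).add
        ((continuous_const.sub continuous_id).smul continuous_const))
    exact ((hcont_fderiv.comp hp2).clm_apply continuous_const)
  -- first line integral
  have hline1 : H (p1, q1) - H (p0, q1) = ∑ i, c i * A i := by
    have := line_integral_aux H hH ((p0, q1)) ((p1, q1))
    rw [← this]
    have heq : ∀ ξ : ℝ, fderiv ℝ H (ξ • ((p1, q1) : _ × _) + (1 - ξ) • (p0, q1))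
        (((p1, q1) : (Fin d → ℝ) × (Fin d → ℝ)) - (p0, q1))
        = ∑ i, c i * Hp (ξ • p1 + (1 - ξ) • p0) q1 i := by
      intro ξ
      have hsub : (((p1, q1) : (Fin d → ℝ) × (Fin d → ℝ)) - (p0, q1)) = (c, 0) := by
        refine Prod.ext rfl (by simp)
      rw [hpt1 ξ, hsub, hexp1]
      exact Finset.sum_congr rfl fun i _ => by rw [hHp]
    rw [intervalIntegral.integral_congr (fun ξ _ => heq ξ)]
    rw [intervalIntegral.integral_finset_sum (f := fun i ξ => c i * Hp (ξ • p1 + (1 - ξ) • p0) q1 i) (fun i _ =>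
      ((continuous_const.mul (hcontHp i)).intervalIntegrable 0 1))]
    exact Finset.sum_congr rfl fun i _ => by
      rw [intervalIntegral.integral_const_mul]
  -- second line integral
  have hline2 : H (p0, q1) - H (p0, q0) = ∑ i, e i * B i := by
    have := line_integral_aux H hH ((p0, q0)) ((p0, q1))
    rw [← this]
    have heq : ∀ ξ : ℝ, fderiv ℝ H (ξ • ((p0, q1) : _ × _) + (1 - ξ) • (p0, q0))
        (((p0, q1) : (Fin d → ℝ) × (Fin d → ℝ)) - (p0, q0))
        = ∑ i, e i * Hq p0 (ξ • q1 + (1 - ξ) • q0) i := by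
      intro ξ
      have hsub : (((p0, q1) : (Fin d → ℝ) × (Fin d → ℝ)) - (p0, q0)) = (0, e) := by
        refine Prod.ext (by simp) rfl
      rw [hpt2 ξ, hsub, hexp2]
      exact Finset.sum_congr rfl fun i _ => by rw [hHq]
    rw [intervalIntegral.integral_congr (fun ξ _ => heq ξ)]
    rw [intervalIntegral.integral_finset_sum (f := fun i ξ => e i * Hq p0 (ξ • q1 + (1 - ξ) • q0) i) (fun i _ =>
      ((continuous_const.mul (hcontHq i)).intervalIntegrable 0 1))]
    exact Finset.sum_congr rfl fun i _ => by
      rw [intervalIntegral.integral_const_mul]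
  -- total energy difference as dot product
  have htotal : H (p1, q1) - H (p0, q0)
      = ∑ j : Fin d ⊕ Fin d, (Sum.elim c e) j * v j := by
    rw [Fintype.sum_sum_type]
    simp only [Sum.elim_inl, Sum.elim_inr, hv]
    linarith [hline1, hline2]
  -- use the update and skew-symmetry
  have hw : ∀ j, (Sum.elim c e) j = τ * S.mulVec v j := by
    intro j
    have := hupdate j
    simp only [smul_eq_mul] at this
    field_simp at this ⊢
    linarith [this]
  have hskew : S.mulVec v ⬝ᵥ v = 0 := by
    have h1 : v ⬝ᵥ S.mulVec v = S.vecMul v ⬝ᵥ v := Matrix.dotProduct_mulVec v S v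
    have h2 : S.vecMul v = -(S.mulVec v) := by
      rw [← Matrix.mulVec_transpose, hS, Matrix.neg_mulVec]
    rw [h2, neg_dotProduct, dotProduct_comm] at h1
    linarith [h1]
  have : H (p1, q1) - H (p0, q0) = 0 := by
    rw [htotal]
    calc ∑ j : Fin d ⊕ Fin d, (Sum.elim c e) j * v j
        = ∑ j : Fin d ⊕ Fin d, τ * (S.mulVec v j * v j) := by
          exact Finset.sum_congr rfl fun j _ => by rw [hw j]; ring
      _ = τ * (S.mulVec v ⬝ᵥ v) := by
          rw [← Finset.mul_sum]; rfl
      _ = 0 := by rw [hskew, mul_zero]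
  linarith [this]
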